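/- If E is a consistent stable extension of a default theory D (with empty knowledge base), then the set of generating defaults G = {d ∈ D | α(d) ∈ E, ¬β(d) ∉ E} is a stable default set of D, and E = Th({γ(d) | d ∈ G}). -/

import Mathlib

inductive PF (V : Type) : Type
  | var : V → PF V
  | top : PF V
  | bot : PF V
  | neg : PF V → PF V
  | conj : PF V → PF V → PF V
  | disj : PF V → PF V → PF V

namespace PF
variable {V : Type}
def eval (θ : V → Bool) : PF V → Bool
  | var a => θ a
  | top => true
  | bot => false
  | neg f => !(eval θ f)
  | conj f g => eval θ f && eval θ g
  | disj f g => eval θ f || eval θ g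
end PF

/-- A set of formulas is satisfiable if one assignment satisfies all of them. -/
def SatSet {V : Type} (S : Set (PF V)) : Prop := ∃ θ : V → Bool, ∀ f ∈ S, f.eval θ = true

/-- Semantic consequence of a set of formulas. -/
def Entails {V : Type} (S : Set (PF V)) (g : PF V) : Prop :=
  ∀ θ : V → Bool, (∀ f ∈ S, f.eval θ = true) → g.eval θ = true

/-- Deductive closure. -/
def Th {V : Type} (S : Set (PF V)) : Set (PF V) := {g | Entails S g}

/-- A default rule (prerequisite, justification, conclusion). -/
structure DRule (V : Type) where
  pre : PF V
  jus : PF V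
  con : PF V

/-- The defining conditions of Reiter's Γ operator: G contains W, is deductively
closed, and is closed under defaults applicable w.r.t. E. -/
def GammaPred {V : Type} (W : Set (PF V)) (D : Set (DRule V)) (E G : Set (PF V)) : Prop :=
  W ⊆ G ∧ Th G ⊆ G ∧ ∀ d ∈ D, d.pre ∈ G → d.jus.neg ∉ E → d.con ∈ G

/-- Γ(E): the smallest set satisfying the conditions above. -/
def Gamma {V : Type} (W : Set (PF V)) (D : Set (DRule V)) (E : Set (PF V)) : Set (PF V) :=
  ⋂₀ {G | GammaPred W D E G}

/-- E is a stable extension of ⟨W, D⟩ iff E = Γ(E). -/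
def StableExt {V : Type} (W : Set (PF V)) (D : Set (DRule V)) (E : Set (PF V)) : Prop :=
  E = Gamma W D E

/-- E(S): conclusions of the defaults in S. -/
def concls {V : Type} (S : Set (DRule V)) : Set (PF V) := DRule.con '' S

/-- d is α-satisfiable in S. -/
def ASat {V : Type} (S : Set (DRule V)) (d : DRule V) : Prop :=
  SatSet (concls S ∪ {d.pre.neg})

/-- d is β-satisfiable in S. -/
def BSat {V : Type} (S : Set (DRule V)) (d : DRule V) : Prop :=
  ¬ SatSet (concls S ∪ {d.jus})

/-- d is γ-satisfiable in S. -/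
def GSat {V : Type} (S : Set (DRule V)) (d : DRule V) : Prop := d ∈ S

/-- S is a satisfying default set of D. -/
def SatisfyingSet {V : Type} (D S : Set (DRule V)) : Prop :=
  S ⊆ D ∧ ∀ d ∈ D, ASat S d ∨ BSat S d ∨ GSat S d

/-- S is a stable default set of D. -/
def StableSet {V : Type} (D S : Set (DRule V)) : Prop :=
  SatisfyingSet D S ∧
    ¬ ∃ S', S' ⊂ S ∧ ∀ d ∈ D, ASat S' d ∨ BSat S d ∨ GSat S' d


section Aux
variable {V : Type}

lemma th_mono {S T : Set (PF V)} (h : S ⊆ T) : Th S ⊆ Th T :=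
  fun _ hg θ hθ => hg θ (fun f hf => hθ f (h hf))

lemma subset_th {S : Set (PF V)} : S ⊆ Th S :=
  fun f hf θ hθ => hθ f hf

lemma sat_th {S : Set (PF V)} {θ : V → Bool} (hθ : ∀ f ∈ S, f.eval θ = true) :
    ∀ f ∈ Th S, f.eval θ = true := fun f hf => hf θ hθ

lemma th_th {S : Set (PF V)} : Th (Th S) ⊆ Th S :=
  fun _ hg θ hθ => hg θ (sat_th hθ)

lemma gammaPred_gamma (W : Set (PF V)) (D : Set (DRule V)) (E : Set (PF V)) :
    GammaPred W D E (Gamma W D E) := by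
  refine ⟨?_, ?_, ?_⟩
  · intro w hw G hG; exact hG.1 hw
  · intro g hg G hG
    exact hG.2.1 (th_mono (Set.sInter_subset_of_mem hG) hg)
  · intro d hd hpre hjus G hG
    exact hG.2.2 d hd (hpre G hG) hjus

lemma not_entails {S : Set (PF V)} {g : PF V} (h : g ∉ Th S) :
    ∃ θ : V → Bool, (∀ f ∈ S, f.eval θ = true) ∧ g.eval θ = false := by
  simp only [Th, Set.mem_setOf_eq, Entails, not_forall] at h
  obtain ⟨θ, hθ, hg⟩ := h
  exact ⟨θ, hθ, by simpa using hg⟩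

end Aux

/-- If E is a consistent stable extension of D (empty knowledge base), then the
set of generating defaults G is a stable default set of D and E = Th(E(G)). -/

theorem generating_defaults_of_consistent_extension {V : Type}
    (D : Set (DRule V)) (E : Set (PF V))
    (hE : StableExt (∅ : Set (PF V)) D E) (hcons : PF.bot ∉ E) :
    StableSet D {d | d ∈ D ∧ d.pre ∈ E ∧ d.jus.neg ∉ E} ∧
    E = Th (concls {d | d ∈ D ∧ d.pre ∈ E ∧ d.jus.neg ∉ E}) := by
  set Gd : Set (DRule V) := {d | d ∈ D ∧ d.pre ∈ E ∧ d.jus.neg ∉ E} with hGd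
  have hEG : GammaPred (∅ : Set (PF V)) D E E := by
    have h := gammaPred_gamma ∅ D E
    rwa [← hE] at h
  have hEmin : ∀ G, GammaPred (∅ : Set (PF V)) D E G → E ⊆ G := by
    intro G hG
    rw [hE]
    exact Set.sInter_subset_of_mem hG
  have hcE : concls Gd ⊆ E := by
    rintro c ⟨d, ⟨hdD, hpre, hjus⟩, rfl⟩
    exact hEG.2.2 d hdD hpre hjus
  have hThE : Th (concls Gd) ⊆ E := (th_mono hcE).trans hEG.2.1
  have hgp : GammaPred (∅ : Set (PF V)) D E (Th (concls Gd)) := by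
    refine ⟨Set.empty_subset _, th_th, ?_⟩
    intro d hd hpre hjus
    exact subset_th ⟨d, ⟨hd, hThE hpre, hjus⟩, rfl⟩
  have hEeq : E = Th (concls Gd) := Set.Subset.antisymm (hEmin _ hgp) hThE
  -- no BSat for defaults whose justification-negation is not in E
  have hnoB : ∀ d : DRule V, d.jus.neg ∉ E → ¬ BSat Gd d := by
    intro d hjus hB
    rw [hEeq] at hjus
    obtain ⟨θ, hθ, hne⟩ := not_entails hjus
    exact hB ⟨θ, by
      rintro f (hf | rfl)
      · exact hθ f hf
      · simpa [PF.eval] using hne⟩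
  refine ⟨⟨⟨fun d hd => hd.1, ?_⟩, ?_⟩, hEeq⟩
  · -- satisfying set
    intro d hd
    by_cases hjus : d.jus.neg ∈ E
    · refine Or.inr (Or.inl ?_)
      rintro ⟨θ, hθ⟩
      have hsatE : ∀ f ∈ E, f.eval θ = true := by
        rw [hEeq]; exact sat_th (fun f hf => hθ f (Or.inl hf))
      have h1 := hsatE _ hjus
      have h2 := hθ d.jus (Or.inr rfl)
      simp [PF.eval, h2] at h1
    · by_cases hpre : d.pre ∈ E
      · exact Or.inr (Or.inr ⟨hd, hpre, hjus⟩)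
      · refine Or.inl ?_
        rw [hEeq] at hpre
        obtain ⟨θ, hθ, hne⟩ := not_entails hpre
        refine ⟨θ, ?_⟩
        rintro f (hf | rfl)
        · exact hθ f hf
        · simp [PF.eval, hne]
  · -- minimality
    rintro ⟨S', hssub, hall⟩
    have hS'c : concls S' ⊆ concls Gd := Set.image_mono hssub.subset
    have hThS' : Th (concls S') ⊆ E := hEeq ▸ th_mono hS'c
    have hgp' : GammaPred (∅ : Set (PF V)) D E (Th (concls S')) := by
      refine ⟨Set.empty_subset _, th_th, ?_⟩
      intro d hd hpre hjus
      rcases hall d hd with hA | hB | hG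
      · obtain ⟨θ, hθ⟩ := hA
        have h1 : d.pre.eval θ = true :=
          hpre θ (fun f hf => hθ f (Or.inl hf))
        have h2 := hθ d.pre.neg (Or.inr rfl)
        simp [PF.eval, h1] at h2
      · exact absurd hB (hnoB d hjus)
      · exact subset_th ⟨d, hG, rfl⟩
    have hEeq' : E = Th (concls S') := Set.Subset.antisymm (hEmin _ hgp') hThS'
    obtain ⟨d, hdG, hdS'⟩ := Set.exists_of_ssubset hssub
    rcases hall d hdG.1 with hA | hB | hG
    · obtain ⟨θ, hθ⟩ := hA
      have h1 : d.pre.eval θ = true := by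
        have := hdG.2.1
        rw [hEeq'] at this
        exact this θ (fun f hf => hθ f (Or.inl hf))
      have h2 := hθ d.pre.neg (Or.inr rfl)
      simp [PF.eval, h1] at h2
    · exact absurd hB (hnoB d hdG.2.2)
    · exact hdS' hG
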